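/- Let n ≥ 1 and n/(n+1) < r ≤ 1. Let j, j' ∈ ℤ and set s = 2^{j∨j'}. For each dyadic cube I' ⊂ ℝ^n of side 2^{j'} choose x_{I'} ∈ I' and a_{I'} ≥ 0. Then for all u ∈ ℝ^n, Σ_{I'} |I'| a_{I'} · s^{-n} (1 + s^{-1}|u − x_{I'}|)^{-(n+1)} ≤ C · 2^{n(j∨j' − j')(1/r − 1)} · [M(Σ_{I'} a_{I'}^r χ_{I'})(u)]^{1/r}, where M is the Hardy–Littlewood maximal operator and C depends only on n and r. -/

import Mathlib

open MeasureTheory Real Set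
open scoped ENNReal

noncomputable section

/-- The dyadic cube of ℝ^n with side length `2^j` indexed by `k ∈ ℤ^n`. -/
def dyadicCube (n : ℕ) (j : ℤ) (k : Fin n → ℤ) : Set (EuclideanSpace ℝ (Fin n)) :=
  {x | ∀ i, (k i : ℝ) * 2 ^ j ≤ x i ∧ x i < ((k i : ℝ) + 1) * 2 ^ j}

/-- The Hardy–Littlewood maximal operator (averages over balls containing the point). -/
def hlMax (n : ℕ) (f : EuclideanSpace ℝ (Fin n) → ℝ≥0∞) (x : EuclideanSpace ℝ (Fin n)) :
    ℝ≥0∞ :=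
  ⨆ (c : EuclideanSpace ℝ (Fin n)) (ρ : ℝ) (_ : x ∈ Metric.ball c ρ),
    (volume (Metric.ball c ρ))⁻¹ * ∫⁻ y in Metric.ball c ρ, f y

/-! ### Auxiliary lemmas -/

lemma DMOP.dyadicCube_eq (n : ℕ) (j : ℤ) (k : Fin n → ℤ) :
    dyadicCube n j k = (MeasurableEquiv.toLp 2 (Fin n → ℝ)).symm ⁻¹'
      (Set.univ.pi fun i => Set.Ico ((k i : ℝ) * 2 ^ j) (((k i : ℝ) + 1) * 2 ^ j)) := by
  ext x
  simp only [dyadicCube, Set.mem_preimage, Set.mem_pi, Set.mem_univ, true_implies, Set.mem_Ico,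
    Set.mem_setOf_eq]
  rfl

lemma DMOP.measurableSet_dyadicCube (n : ℕ) (j : ℤ) (k : Fin n → ℤ) :
    MeasurableSet (dyadicCube n j k) := by
  rw [DMOP.dyadicCube_eq]
  exact (MeasurableEquiv.toLp 2 (Fin n → ℝ)).symm.measurable
    (MeasurableSet.univ_pi fun i => measurableSet_Ico)

lemma DMOP.ofReal_two_zpow (j : ℤ) : ENNReal.ofReal ((2:ℝ)^j) = (2:ℝ≥0∞)^((j:ℝ)) := by
  rw [← Real.rpow_intCast, ← ENNReal.ofReal_rpow_of_pos two_pos]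
  norm_num

lemma DMOP.volume_dyadicCube (n : ℕ) (j : ℤ) (k : Fin n → ℤ) :
    volume (dyadicCube n j k) = (2:ℝ≥0∞) ^ (((j * n : ℤ)):ℝ) := by
  rw [DMOP.dyadicCube_eq,
    (EuclideanSpace.volume_preserving_symm_measurableEquiv_toLp (Fin n)).measure_preimage
      ((MeasurableSet.univ_pi fun i => measurableSet_Ico).nullMeasurableSet),
    volume_pi_pi]
  have h1 : ∀ i : Fin n, volume (Set.Ico ((k i : ℝ) * 2 ^ j) (((k i : ℝ) + 1) * 2 ^ j))
      = (2:ℝ≥0∞)^((j:ℝ)) := by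
    intro i
    rw [Real.volume_Ico]
    have : ((k i : ℝ) + 1) * 2 ^ j - (k i : ℝ) * 2 ^ j = 2 ^ j := by ring
    rw [this, DMOP.ofReal_two_zpow]
  rw [Finset.prod_congr rfl (fun i _ => h1 i), Finset.prod_const, Finset.card_univ,
    Fintype.card_fin, ← ENNReal.rpow_natCast _ n, ← ENNReal.rpow_mul]
  norm_num

/-- Points of the same dyadic cube are at distance at most `√n · 2^j`. -/
lemma DMOP.norm_sub_le_of_mem_dyadicCube {n : ℕ} {j : ℤ} {k : Fin n → ℤ}
    {x y : EuclideanSpace ℝ (Fin n)} (hx : x ∈ dyadicCube n j k) (hy : y ∈ dyadicCube n j k) :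
    ‖x - y‖ ≤ Real.sqrt n * 2 ^ j := by
  have hnorm : ‖x - y‖ = Real.sqrt (∑ i, (x i - y i) ^ 2) := by
    rw [EuclideanSpace.norm_eq]
    congr 1
    refine Finset.sum_congr rfl fun i _ => ?_
    have : (x - y) i = x i - y i := rfl
    rw [this, Real.norm_eq_abs, sq_abs]
  rw [hnorm]
  have hb : ∀ i : Fin n, (x i - y i) ^ 2 ≤ ((2:ℝ)^j)^2 := by
    intro i
    have h1 := hx i
    have h2 := hy i
    have : |x i - y i| ≤ (2:ℝ)^j := by
      rw [abs_le]
      constructor <;> nlinarith [h1.1, h1.2, h2.1, h2.2]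
    calc (x i - y i)^2 = |x i - y i|^2 := (sq_abs _).symm
      _ ≤ ((2:ℝ)^j)^2 := by
          apply pow_le_pow_left₀ (abs_nonneg _) this
  calc Real.sqrt (∑ i, (x i - y i) ^ 2) ≤ Real.sqrt (∑ _i : Fin n, ((2:ℝ)^j)^2) := by
        apply Real.sqrt_le_sqrt
        exact Finset.sum_le_sum fun i _ => hb i
    _ = Real.sqrt ((n : ℝ) * ((2:ℝ)^j)^2) := by rw [Finset.sum_const, Finset.card_univ,
        Fintype.card_fin, nsmul_eq_mul]
    _ = Real.sqrt n * 2^j := by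
        rw [Real.sqrt_mul (Nat.cast_nonneg n), Real.sqrt_sq (by positivity)]

lemma DMOP.le_hlMax (n : ℕ) (f : EuclideanSpace ℝ (Fin n) → ℝ≥0∞)
    (u c : EuclideanSpace ℝ (Fin n)) (ρ : ℝ) (h : u ∈ Metric.ball c ρ) :
    (volume (Metric.ball c ρ))⁻¹ * ∫⁻ y in Metric.ball c ρ, f y ≤ hlMax n f u := by
  refine le_trans ?_ (le_iSup _ c)
  refine le_trans ?_ (le_iSup _ ρ)
  exact le_iSup (fun _ : u ∈ Metric.ball c ρ =>
    (volume (Metric.ball c ρ))⁻¹ * ∫⁻ y in Metric.ball c ρ, f y) h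

/-- `ℓ^r ⊆ ℓ^1` for `0 < r ≤ 1`, `ℝ≥0∞`-version. -/
lemma DMOP.tsum_le_tsum_rpow {ι : Type*} (f : ι → ℝ≥0∞) {p : ℝ} (hp : 0 < p) (hp1 : p ≤ 1) :
    ∑' i, f i ≤ (∑' i, f i ^ p) ^ (1/p) := by
  rw [ENNReal.tsum_eq_iSup_sum]
  refine iSup_le fun s => ?_
  have h1 : (∑ i ∈ s, f i) ^ p ≤ ∑ i ∈ s, f i ^ p := by
    classical
    induction s using Finset.induction with
    | empty => simp [ENNReal.zero_rpow_of_pos hp]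
    | insert _ _ h ih =>
      rw [Finset.sum_insert h, Finset.sum_insert h]
      exact le_trans (ENNReal.rpow_add_le_add_rpow _ _ hp.le hp1) (by gcongr)
  have h2 : (∑ i ∈ s, f i ^ p) ≤ ∑' i, f i ^ p := ENNReal.sum_le_tsum s
  calc ∑ i ∈ s, f i = ((∑ i ∈ s, f i) ^ p) ^ (1/p) := by
        rw [← ENNReal.rpow_mul, mul_one_div, div_self hp.ne', ENNReal.rpow_one]
    _ ≤ (∑' i, f i ^ p) ^ (1/p) :=
        ENNReal.rpow_le_rpow (h1.trans h2) (by positivity)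

/-- antitonicity of `x ↦ x^(-c)` on `ℝ≥0∞`. -/
lemma DMOP.rpow_neg_le_rpow_neg {x y : ℝ≥0∞} {c : ℝ} (hc : 0 ≤ c) (h : x ≤ y) :
    y ^ (-c) ≤ x ^ (-c) := by
  rw [ENNReal.rpow_neg, ENNReal.rpow_neg]
  exact ENNReal.inv_le_inv.mpr (ENNReal.rpow_le_rpow h hc)

/-- One-parameter discrete majorization lemma: for `n/(n+1) < r ≤ 1` and scales
`s = 2^{j∨j'}`, sums of sampled values over dyadic cubes of side `2^{j'}` against a
Poisson-type profile at scale `s` are dominated by the `r`-maximal function, with loss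
`2^{n(j∨j'−j')(1/r−1)}`. -/
theorem discrete_majorization_one_parameter (n : ℕ) (hn : 1 ≤ n)
    (r : ℝ) (hr1 : (n : ℝ) / (n + 1) < r) (hr2 : r ≤ 1) :
    ∃ C : ℝ≥0∞, 0 < C ∧ C ≠ ⊤ ∧ ∀ j j' : ℤ, ∀ a : (Fin n → ℤ) → ℝ≥0∞,
      ∀ xc : (Fin n → ℤ) → EuclideanSpace ℝ (Fin n),
        (∀ k, xc k ∈ dyadicCube n j' k) →
      ∀ u : EuclideanSpace ℝ (Fin n),
        (∑' k : Fin n → ℤ,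
            (2 : ℝ≥0∞) ^ (j' * (n : ℤ)) * a k *
              (((2 : ℝ≥0∞) ^ (max j j')) ^ (-(n : ℝ)) *
                (1 + ((2 : ℝ≥0∞) ^ (max j j'))⁻¹ *
                    ENNReal.ofReal ‖u - xc k‖) ^ (-((n : ℝ) + 1))))
          ≤ C * (2 : ℝ≥0∞) ^ (((n : ℝ) * ((max j j' - j' : ℤ) : ℝ)) * (1 / r - 1)) *
              (hlMax n (fun x => ∑' k : Fin n → ℤ,
                  (a k) ^ r * (dyadicCube n j' k).indicator 1 x) u) ^ (1 / r) := by
  classical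
  haveI : NeZero n := ⟨by omega⟩
  -- basic facts about r
  have hr0 : 0 < r := lt_of_le_of_lt (by positivity) hr1
  have hnr : (n : ℝ) / r < (n : ℝ) + 1 := by
    rw [div_lt_iff₀ hr0]
    calc (n:ℝ) = ((n:ℝ)/(n+1)) * (n+1) := by field_simp
      _ < r * (n+1) := by
          apply mul_lt_mul_of_pos_right hr1
          positivity
      _ = ((n:ℝ)+1) * r := by ring
  -- shorthand for powers of two
  set P : ℝ → ℝ≥0∞ := fun e => (2:ℝ≥0∞) ^ e with hP
  have hPne0 : ∀ e, P e ≠ 0 := fun e => by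
    simp [hP, ENNReal.rpow_eq_zero_iff]
  have hPnetop : ∀ e, P e ≠ ⊤ := fun e => by
    simp [hP, ENNReal.rpow_eq_top_iff]
  have hPadd : ∀ e₁ e₂, P (e₁ + e₂) = P e₁ * P e₂ := fun e₁ e₂ =>
    ENNReal.rpow_add _ _ (by norm_num) (by norm_num)
  -- the geometric ratio
  set q : ℝ≥0∞ := P ((n:ℝ)/r - ((n:ℝ)+1)) with hq
  have hq1 : q < 1 :=
    ENNReal.rpow_lt_one_of_one_lt_of_neg (by norm_num) (by linarith)
  have hgeom : ∑' m : ℕ, q ^ m = (1 - q)⁻¹ := ENNReal.tsum_geometric q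
  have h1q : (1 - q)⁻¹ ≠ ⊤ := by
    rw [Ne, ENNReal.inv_eq_top, tsub_eq_zero_iff_le]
    exact not_le.mpr hq1
  have h1q0 : (1 - q)⁻¹ ≠ 0 := by
    simp only [Ne, ENNReal.inv_eq_zero]
    exact (lt_of_le_of_lt tsub_le_self (by norm_num)).ne
  -- the dimensional constant
  set V1 : ℝ≥0∞ := volume (Metric.ball (0 : EuclideanSpace ℝ (Fin n)) 1) with hV1
  have hV1pos : 0 < V1 := Metric.measure_ball_pos volume 0 one_pos
  have hV1top : V1 ≠ ⊤ := measure_ball_lt_top.ne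
  set Cb : ℝ≥0∞ := ENNReal.ofReal ((1 + Real.sqrt n)^n) * V1 with hCb
  have hCb0 : Cb ≠ 0 := by
    apply mul_ne_zero _ hV1pos.ne'
    simp only [Ne, ENNReal.ofReal_eq_zero, not_le]
    positivity
  have hCbtop : Cb ≠ ⊤ := ENNReal.mul_ne_top ENNReal.ofReal_ne_top hV1top
  refine ⟨P ((n:ℝ)+1) * Cb ^ (1/r) * (1 - q)⁻¹, ?_, ?_, ?_⟩
  · apply ENNReal.mul_pos (mul_ne_zero (hPne0 _) _) h1q0
    simp [ENNReal.rpow_eq_zero_iff, hCb0, hCbtop]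
  · exact ENNReal.mul_ne_top (ENNReal.mul_ne_top (hPnetop _)
      (by simp [ENNReal.rpow_eq_top_iff, hCb0, hCbtop])) h1q
  intro j j' a xc hxc u
  set J : ℤ := max j j' with hJ
  have hj'J : j' ≤ J := le_max_right _ _
  set sR : ℝ := (2:ℝ)^J with hsR
  have hsRpos : 0 < sR := by positivity
  set f : EuclideanSpace ℝ (Fin n) → ℝ≥0∞ :=
    fun x => ∑' k : Fin n → ℤ, (a k) ^ r * (dyadicCube n j' k).indicator 1 x with hf
  set M : ℝ≥0∞ := hlMax n f u with hM
  -- the scale decomposition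
  have exm : ∀ k : Fin n → ℤ, ∃ m : ℕ, ‖u - xc k‖ < 2^m * sR := by
    intro k
    obtain ⟨m, hm⟩ := pow_unbounded_of_one_lt (‖u - xc k‖ / sR) one_lt_two
    exact ⟨m, by rwa [div_lt_iff₀ hsRpos] at hm⟩
  set mfun : (Fin n → ℤ) → ℕ := fun k => Nat.find (exm k) with hmfun
  have hm1 : ∀ k, ‖u - xc k‖ < 2^(mfun k) * sR := fun k => Nat.find_spec (exm k)
  have hm2 : ∀ k m0, mfun k = m0 + 1 → 2^m0 * sR ≤ ‖u - xc k‖ := by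
    intro k m0 h
    have := Nat.find_min (exm k) (by omega : m0 < mfun k)
    exact not_lt.mp this
  -- Step 1: pointwise bound on the Poisson profile in terms of the scale of k
  have key2 : ∀ k : Fin n → ℤ,
      (1 + (P ((J:ℝ)))⁻¹ * ENNReal.ofReal ‖u - xc k‖) ^ (-((n:ℝ)+1))
        ≤ P ((((n:ℝ))+1) - (mfun k) * (((n:ℝ))+1)) := by
    intro k
    rcases h : mfun k with _ | m0
    · -- m = 0 : profile ≤ 1 ≤ P (n+1)
      have h1 : (1 + (P ((J:ℝ)))⁻¹ * ENNReal.ofReal ‖u - xc k‖) ^ (-((n:ℝ)+1)) ≤ 1 := by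
        have := DMOP.rpow_neg_le_rpow_neg (x := (1:ℝ≥0∞))
          (y := 1 + (P ((J:ℝ)))⁻¹ * ENNReal.ofReal ‖u - xc k‖)
          (c := (n:ℝ)+1) (by positivity) le_self_add
        simpa using this
      refine h1.trans ?_
      have : (1:ℝ≥0∞) = P 0 := by simp [hP]
      rw [this]
      apply ENNReal.rpow_le_rpow_of_exponent_le (by norm_num)
      have hn' : (1:ℝ) ≤ n := by exact_mod_cast hn
      push_cast
      nlinarith
    · -- m = m0 + 1 : the point is far from the cube
      have hdist : 2^m0 * sR ≤ ‖u - xc k‖ := hm2 k m0 h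
      have hofReal : ENNReal.ofReal ((2:ℝ)^m0 * sR) = P ((m0:ℝ) + (J:ℝ)) := by
        rw [ENNReal.ofReal_mul (by positivity), hsR, DMOP.ofReal_two_zpow,
          ENNReal.ofReal_pow (by norm_num), ENNReal.ofReal_ofNat,
          ← ENNReal.rpow_natCast 2 m0, hPadd]
      have hbase : P ((m0:ℝ)) ≤ 1 + (P ((J:ℝ)))⁻¹ * ENNReal.ofReal ‖u - xc k‖ := by
        have h2 : P ((m0:ℝ) + (J:ℝ)) ≤ ENNReal.ofReal ‖u - xc k‖ := by
          rw [← hofReal]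
          exact ENNReal.ofReal_le_ofReal hdist
        have h3 : (P ((J:ℝ)))⁻¹ * P ((m0:ℝ) + (J:ℝ)) ≤ (P ((J:ℝ)))⁻¹ * ENNReal.ofReal ‖u - xc k‖ :=
          mul_le_mul_right h2 _
        have h4 : (P ((J:ℝ)))⁻¹ * P ((m0:ℝ) + (J:ℝ)) = P ((m0:ℝ)) := by
          rw [hPadd, mul_comm (P ((m0:ℝ))), ← mul_assoc, ENNReal.inv_mul_cancel (hPne0 _)
            (hPnetop _), one_mul]
        calc P ((m0:ℝ)) = (P ((J:ℝ)))⁻¹ * P ((m0:ℝ) + (J:ℝ)) := h4.symm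
          _ ≤ (P ((J:ℝ)))⁻¹ * ENNReal.ofReal ‖u - xc k‖ := h3
          _ ≤ 1 + (P ((J:ℝ)))⁻¹ * ENNReal.ofReal ‖u - xc k‖ := le_add_self
      calc (1 + (P ((J:ℝ)))⁻¹ * ENNReal.ofReal ‖u - xc k‖) ^ (-((n:ℝ)+1))
          ≤ (P ((m0:ℝ))) ^ (-((n:ℝ)+1)) :=
            DMOP.rpow_neg_le_rpow_neg (by positivity) hbase
        _ = P ((((n:ℝ))+1) - ((m0+1:ℕ):ℝ) * (((n:ℝ))+1)) := by
            rw [hP, ← ENNReal.rpow_mul]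
            congr 1
            push_cast
            ring
  -- Step 2: fiber sums of `a^r` are controlled by the maximal function
  have key1 : ∀ m : ℕ, ∑' (k : {k : Fin n → ℤ // mfun k = m}), a k.val
      ≤ (Cb * P (((J:ℝ) - (j':ℝ))*(n:ℝ) + (m:ℝ)*(n:ℝ)) * M) ^ (1/r) := by
    intro m
    set ρm : ℝ := (1 + Real.sqrt n) * 2^m * sR with hρm
    have hρpos : 0 < ρm := by
      have := Real.sqrt_nonneg (n:ℝ)
      positivity
    set B : Set (EuclideanSpace ℝ (Fin n)) := Metric.ball u ρm with hB
    have hsub : ∀ k : Fin n → ℤ, mfun k = m → dyadicCube n j' k ⊆ B := by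
      intro k hk y hy
      rw [hB, Metric.mem_ball, dist_eq_norm]
      have h1 : ‖y - xc k‖ ≤ Real.sqrt n * 2^(j':ℤ) :=
        DMOP.norm_sub_le_of_mem_dyadicCube hy (hxc k)
      have h2 : ‖u - xc k‖ < 2^m * sR := hk ▸ hm1 k
      have h2' : (2:ℝ)^(j':ℤ) ≤ sR := by
        rw [hsR]; exact zpow_le_zpow_right₀ one_le_two hj'J
      have h3 : (1:ℝ) ≤ 2^m := one_le_pow₀ one_le_two
      have hs0 : 0 ≤ Real.sqrt (n:ℝ) := Real.sqrt_nonneg _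
      calc ‖y - u‖ = ‖(y - xc k) + (xc k - u)‖ := by abel_nf
        _ ≤ ‖y - xc k‖ + ‖xc k - u‖ := norm_add_le _ _
        _ = ‖y - xc k‖ + ‖u - xc k‖ := by rw [norm_sub_rev (xc k)]
        _ < Real.sqrt n * 2^(j':ℤ) + 2^m * sR := by
            apply add_lt_add_of_le_of_lt h1 h2
        _ ≤ ρm := by
            rw [hρm]
            have : Real.sqrt n * (2:ℝ)^(j':ℤ) ≤ Real.sqrt n * (2^m * sR) := by
              apply mul_le_mul_of_nonneg_left _ hs0
              nlinarith
            nlinarith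
    have hu : u ∈ B := Metric.mem_ball_self hρpos
    have hvol0 : volume B ≠ 0 := (Metric.measure_ball_pos volume u hρpos).ne'
    have hvoltop : volume B ≠ ⊤ := measure_ball_lt_top.ne
    -- volume of the ball
    have hvolB : volume B = Cb * P (((m:ℝ))*(n:ℝ) + ((J:ℝ))*(n:ℝ)) := by
      rw [hB, Measure.addHaar_ball volume u hρpos.le, finrank_euclideanSpace_fin, hρm]
      have hρn : ((1 + Real.sqrt n) * 2^m * sR)^n = (1 + Real.sqrt n)^n * (2:ℝ)^(m*n) * sR^n := by
        rw [mul_pow, mul_pow, pow_mul]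
      rw [hρn, ENNReal.ofReal_mul (by positivity), ENNReal.ofReal_mul (by positivity)]
      have e1 : ENNReal.ofReal ((2:ℝ)^(m*n)) = P (((m:ℝ))*(n:ℝ)) := by
        rw [ENNReal.ofReal_pow (by norm_num), ENNReal.ofReal_ofNat,
          ← ENNReal.rpow_natCast 2 (m*n)]
        congr 1
        push_cast
        ring
      have e2 : ENNReal.ofReal (sR^n) = P (((J:ℝ))*(n:ℝ)) := by
        rw [hsR, ← zpow_natCast ((2:ℝ)^(J:ℤ)) n, ← zpow_mul, DMOP.ofReal_two_zpow]
        congr 1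
        push_cast
        ring
      rw [e1, e2, hCb, hPadd]
      ring
    -- the fiber sum against the cube volumes is a lower bound for the integral over B
    have hsum1 : P (((j':ℝ))*(n:ℝ)) * ∑' (k : {k : Fin n → ℤ // mfun k = m}), (a k.val) ^ r
        ≤ ∫⁻ y in B, f y := by
      have e3 : ∀ k : {k : Fin n → ℤ // mfun k = m},
          (a k.val) ^ r * P (((j':ℝ))*(n:ℝ))
            = ∫⁻ y in B, (a k.val) ^ r * (dyadicCube n j' k.val).indicator 1 y := by
        intro k
        rw [lintegral_const_mul _ (measurable_one.indicator (DMOP.measurableSet_dyadicCube n j' k.val)),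
          lintegral_indicator_one (DMOP.measurableSet_dyadicCube n j' k.val),
          Measure.restrict_apply (DMOP.measurableSet_dyadicCube n j' k.val),
          Set.inter_eq_self_of_subset_left (hsub k.val k.prop), DMOP.volume_dyadicCube]
        congr 2
        push_cast
        ring
      calc P (((j':ℝ))*(n:ℝ)) * ∑' (k : {k : Fin n → ℤ // mfun k = m}), (a k.val) ^ r
          = ∑' (k : {k : Fin n → ℤ // mfun k = m}), (a k.val) ^ r * P (((j':ℝ))*(n:ℝ)) := by
            rw [ENNReal.tsum_mul_right, mul_comm]
        _ = ∑' (k : {k : Fin n → ℤ // mfun k = m}),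
              ∫⁻ y in B, (a k.val) ^ r * (dyadicCube n j' k.val).indicator 1 y := by
            exact tsum_congr e3
        _ = ∫⁻ y in B, ∑' (k : {k : Fin n → ℤ // mfun k = m}),
              (a k.val) ^ r * (dyadicCube n j' k.val).indicator 1 y := by
            rw [lintegral_tsum]
            intro k
            exact (Measurable.const_mul (measurable_one.indicator
              (DMOP.measurableSet_dyadicCube n j' k.val)) _).aemeasurable
        _ ≤ ∫⁻ y in B, f y := by
            apply lintegral_mono
            intro y
            rw [hf]
            exact ENNReal.tsum_comp_le_tsum_of_injective Subtype.val_injective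
              (fun k => (a k) ^ r * (dyadicCube n j' k).indicator 1 y)
    have hMf : ∫⁻ y in B, f y ≤ volume B * M := by
      have h5 := DMOP.le_hlMax n f u u ρm hu
      calc ∫⁻ y in B, f y = volume B * ((volume B)⁻¹ * ∫⁻ y in B, f y) := by
            rw [← mul_assoc, ENNReal.mul_inv_cancel hvol0 hvoltop, one_mul]
        _ ≤ volume B * M := mul_le_mul_right h5 _
    -- conclude
    have h6 : ∑' (k : {k : Fin n → ℤ // mfun k = m}), (a k.val) ^ r
        ≤ Cb * P (((J:ℝ) - (j':ℝ))*(n:ℝ) + (m:ℝ)*(n:ℝ)) * M := by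
      have h7 : P (((j':ℝ))*(n:ℝ)) * ∑' (k : {k : Fin n → ℤ // mfun k = m}), (a k.val) ^ r
          ≤ volume B * M := hsum1.trans hMf
      have h8 : ∑' (k : {k : Fin n → ℤ // mfun k = m}), (a k.val) ^ r
          = (P (((j':ℝ))*(n:ℝ)))⁻¹ * (P (((j':ℝ))*(n:ℝ)) *
              ∑' (k : {k : Fin n → ℤ // mfun k = m}), (a k.val) ^ r) := by
        rw [← mul_assoc, ENNReal.inv_mul_cancel (hPne0 _) (hPnetop _), one_mul]
      rw [h8]
      calc (P (((j':ℝ))*(n:ℝ)))⁻¹ * (P (((j':ℝ))*(n:ℝ)) *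
              ∑' (k : {k : Fin n → ℤ // mfun k = m}), (a k.val) ^ r)
          ≤ (P (((j':ℝ))*(n:ℝ)))⁻¹ * (volume B * M) := mul_le_mul_right h7 _
        _ = Cb * P (((J:ℝ) - (j':ℝ))*(n:ℝ) + (m:ℝ)*(n:ℝ)) * M := by
            rw [hvolB, ← ENNReal.rpow_neg]
            have : P (-((((j':ℝ))*(n:ℝ)))) * (Cb * P (((m:ℝ))*(n:ℝ) + ((J:ℝ))*(n:ℝ)) * M)
                = Cb * (P (-((((j':ℝ))*(n:ℝ)))) * P (((m:ℝ))*(n:ℝ) + ((J:ℝ))*(n:ℝ))) * M := by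
              ring
            rw [this, ← hPadd]
            congr 3
            ring
    calc ∑' (k : {k : Fin n → ℤ // mfun k = m}), a k.val
        ≤ (∑' (k : {k : Fin n → ℤ // mfun k = m}), (a k.val) ^ r) ^ (1/r) :=
          DMOP.tsum_le_tsum_rpow _ hr0 hr2
      _ ≤ (Cb * P (((J:ℝ) - (j':ℝ))*(n:ℝ) + (m:ℝ)*(n:ℝ)) * M) ^ (1/r) :=
          ENNReal.rpow_le_rpow h6 (by positivity)
  -- Step 3: assemble everything
  set X : ℝ≥0∞ := Cb ^ (1/r) * M ^ (1/r) with hX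
  set E1 : ℝ := (n:ℝ) * ((J:ℝ) - (j':ℝ)) * (1/r - 1) with hE1
  set F : (Fin n → ℤ) → ℝ≥0∞ := fun k =>
    P ((j':ℝ)*(n:ℝ) - (J:ℝ)*(n:ℝ) + (((n:ℝ)+1) - (mfun k) * ((n:ℝ)+1))) * a k with hF
  have hgle : ∀ k : Fin n → ℤ,
      (2 : ℝ≥0∞) ^ (j' * (n : ℤ)) * a k *
        (((2 : ℝ≥0∞) ^ J) ^ (-(n : ℝ)) *
          (1 + ((2 : ℝ≥0∞) ^ J)⁻¹ * ENNReal.ofReal ‖u - xc k‖) ^ (-((n : ℝ) + 1)))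
      ≤ F k := by
    intro k
    have h1 : (2:ℝ≥0∞) ^ (j' * (n:ℤ)) = P ((j':ℝ)*(n:ℝ)) := by
      rw [hP, ← ENNReal.rpow_intCast 2 (j' * (n:ℤ))]
      congr 1
      push_cast
      ring
    have h2 : ((2:ℝ≥0∞) ^ J) ^ (-(n:ℝ)) = P (-((J:ℝ)*(n:ℝ))) := by
      rw [hP, ← ENNReal.rpow_intCast 2 J, ← ENNReal.rpow_mul]
      congr 1
      ring
    have h3 : ((2:ℝ≥0∞) ^ J)⁻¹ = (P ((J:ℝ)))⁻¹ := by
      rw [hP, ← ENNReal.rpow_intCast 2 J]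
    rw [h1, h2, h3, hF]
    calc P ((j':ℝ)*(n:ℝ)) * a k * (P (-((J:ℝ)*(n:ℝ))) *
          (1 + (P ((J:ℝ)))⁻¹ * ENNReal.ofReal ‖u - xc k‖) ^ (-((n : ℝ) + 1)))
        ≤ P ((j':ℝ)*(n:ℝ)) * a k * (P (-((J:ℝ)*(n:ℝ))) *
            P ((((n:ℝ))+1) - (mfun k) * (((n:ℝ))+1))) := by
          gcongr
          exact key2 k
      _ = P ((j':ℝ)*(n:ℝ) - (J:ℝ)*(n:ℝ) + (((n:ℝ)+1) - (mfun k) * ((n:ℝ)+1))) * a k := by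
          rw [sub_eq_add_neg ((j':ℝ)*(n:ℝ)) ((J:ℝ)*(n:ℝ)), hPadd, hPadd]
          ring
  refine le_trans (ENNReal.tsum_le_tsum hgle) ?_
  have hsigma : ∑' k : Fin n → ℤ, F k
      = ∑' (m : ℕ), ∑' (k : {k : Fin n → ℤ // mfun k = m}), F k.val := by
    rw [← (Equiv.sigmaFiberEquiv mfun).tsum_eq, ENNReal.tsum_sigma']
    rfl
  rw [hsigma]
  have step3 : ∀ m : ℕ, ∑' (k : {k : Fin n → ℤ // mfun k = m}), F k.val
      ≤ P (E1 + ((n:ℝ)+1)) * q ^ m * X := by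
    intro m
    have hFk : ∀ k : {k : Fin n → ℤ // mfun k = m}, F k.val
        = P ((j':ℝ)*(n:ℝ) - (J:ℝ)*(n:ℝ) + (((n:ℝ)+1) - (m:ℝ) * ((n:ℝ)+1))) * a k.val := by
      intro k
      simp only [hF]
      rw [k.prop]
    rw [tsum_congr hFk, ENNReal.tsum_mul_left]
    have hqm : q ^ m = P (((m:ℝ)) * ((n:ℝ)/r - ((n:ℝ)+1))) := by
      rw [hq, hP, ← ENNReal.rpow_natCast _ m, ← ENNReal.rpow_mul, mul_comm]
    calc P ((j':ℝ)*(n:ℝ) - (J:ℝ)*(n:ℝ) + (((n:ℝ)+1) - (m:ℝ) * ((n:ℝ)+1))) *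
          ∑' (k : {k : Fin n → ℤ // mfun k = m}), a k.val
        ≤ P ((j':ℝ)*(n:ℝ) - (J:ℝ)*(n:ℝ) + (((n:ℝ)+1) - (m:ℝ) * ((n:ℝ)+1))) *
            (Cb * P (((J:ℝ) - (j':ℝ))*(n:ℝ) + (m:ℝ)*(n:ℝ)) * M) ^ (1/r) :=
          mul_le_mul_right (key1 m) _
      _ = P (E1 + ((n:ℝ)+1)) * q ^ m * X := by
          rw [ENNReal.mul_rpow_of_nonneg _ _ (by positivity : (0:ℝ) ≤ 1/r),
            ENNReal.mul_rpow_of_nonneg _ _ (by positivity : (0:ℝ) ≤ 1/r)]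
          have h5 : (P (((J:ℝ) - (j':ℝ))*(n:ℝ) + (m:ℝ)*(n:ℝ))) ^ (1/r)
              = P ((((J:ℝ) - (j':ℝ))*(n:ℝ) + (m:ℝ)*(n:ℝ)) * (1/r)) := by
            rw [hP, ← ENNReal.rpow_mul]
          rw [h5, hqm, hX]
          have h6 : P ((j':ℝ)*(n:ℝ) - (J:ℝ)*(n:ℝ) + (((n:ℝ)+1) - (m:ℝ) * ((n:ℝ)+1))) *
                (Cb ^ (1/r) * P ((((J:ℝ) - (j':ℝ))*(n:ℝ) + (m:ℝ)*(n:ℝ)) * (1/r)) * M ^ (1/r))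
              = P (((j':ℝ)*(n:ℝ) - (J:ℝ)*(n:ℝ) + (((n:ℝ)+1) - (m:ℝ) * ((n:ℝ)+1))) +
                  ((((J:ℝ) - (j':ℝ))*(n:ℝ) + (m:ℝ)*(n:ℝ)) * (1/r))) *
                  (Cb ^ (1/r) * M ^ (1/r)) := by
            rw [hPadd ((j':ℝ)*(n:ℝ) - (J:ℝ)*(n:ℝ) + (((n:ℝ)+1) - (m:ℝ) * ((n:ℝ)+1)))
              ((((J:ℝ) - (j':ℝ))*(n:ℝ) + (m:ℝ)*(n:ℝ)) * (1/r))]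
            ring
          rw [h6]
          have h7 : ((j':ℝ)*(n:ℝ) - (J:ℝ)*(n:ℝ) + (((n:ℝ)+1) - (m:ℝ) * ((n:ℝ)+1))) +
                ((((J:ℝ) - (j':ℝ))*(n:ℝ) + (m:ℝ)*(n:ℝ)) * (1/r))
              = (E1 + ((n:ℝ)+1)) + ((m:ℝ)) * ((n:ℝ)/r - ((n:ℝ)+1)) := by
            rw [hE1]
            field_simp
            ring
          rw [h7, hPadd (E1 + ((n:ℝ)+1)) (((m:ℝ)) * ((n:ℝ)/r - ((n:ℝ)+1)))]
  calc ∑' (m : ℕ), ∑' (k : {k : Fin n → ℤ // mfun k = m}), F k.val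
      ≤ ∑' (m : ℕ), P (E1 + ((n:ℝ)+1)) * q ^ m * X := ENNReal.tsum_le_tsum step3
    _ = P (E1 + ((n:ℝ)+1)) * X * (1 - q)⁻¹ := by
        have : ∀ m : ℕ, P (E1 + ((n:ℝ)+1)) * q ^ m * X
            = (P (E1 + ((n:ℝ)+1)) * X) * q ^ m := fun m => by ring
        rw [tsum_congr this, ENNReal.tsum_mul_left, hgeom]
    _ = P (((n:ℝ))+1) * Cb ^ (1/r) * (1 - q)⁻¹ *
          (2 : ℝ≥0∞) ^ (((n : ℝ) * ((J - j' : ℤ) : ℝ)) * (1 / r - 1)) * M ^ (1/r) := by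
        have h8 : (2 : ℝ≥0∞) ^ (((n : ℝ) * ((J - j' : ℤ) : ℝ)) * (1 / r - 1)) = P E1 := by
          rw [hP, hE1]
          congr 1
          push_cast
          ring
        rw [h8, hPadd E1 (((n:ℝ))+1), hX]
        ring



end
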